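/- Let r > 0, K > 0, ε > 0, and let μ be a finite positive measure supported in the cube Q = [0,r]^d ⊆ ℝ^d, of total mass m > 0, absolutely continuous with respect to Lebesgue measure with density bounded above by K. Write points of ℝ^d as x = (σ,τ) with σ ∈ ℝ and τ ∈ ℝ^{d−1}, let α be the pushforward of μ under the projection (σ,τ) ↦ τ, and let μ = μ_τ ⊗ α be the disintegration of μ with respect to this projection, so that μ_τ is a probability measure on [0,r] (in the σ variable) for α-a.e. τ. Fix 0 < δ < 1, set H = K r^d/(ε m), and for α-a.e. τ and every σ ∈ [0,r] with μ_τ([0,σ]) ≤ 1 − δ let f_τ(σ) be determined by μ_τ((σ, f_τ(σ)]) = δ. Define Z = {τ ∈ [0,r]^{d−1} : ∃σ ∈ [0,r] with μ_τ([0,σ]) ≤ 1 − δ and f_τ(σ) − σ < rδ/H}. Then α(Z) ≤ ε m. -/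

import Mathlib

open MeasureTheory Set Filter Topology
open scoped ENNReal

lemma lintegral_bound_aux {X : Type*} [MeasurableSpace X] (ρ : Measure X)
    (F : X → ℝ≥0∞) (B : Set X) (c : ℝ≥0∞) (hc : c ≤ 1)
    (hF : ∀ᵐ x ∂ρ, F x ≤ 1 ∧ (x ∈ B → F x ≤ c)) :
    ∫⁻ x, F x ∂ρ + (1 - c) * ρ B ≤ ρ univ := by
  obtain ⟨g, hgm, hgF, hgeq⟩ := exists_measurable_le_lintegral_eq ρ F
  set S : Set X := {x | c < g x} with hSdef
  have hSm : MeasurableSet S := measurableSet_lt measurable_const hgm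
  have hN : ρ {x | ¬(F x ≤ 1 ∧ (x ∈ B → F x ≤ c))} = 0 := by
    simpa [ae_iff] using hF
  have hBS : ρ B ≤ ρ Sᶜ := by
    have hsub : B ⊆ Sᶜ ∪ {x | ¬(F x ≤ 1 ∧ (x ∈ B → F x ≤ c))} := by
      intro x hx
      by_cases hgood : F x ≤ 1 ∧ (x ∈ B → F x ≤ c)
      · left
        have : g x ≤ c := (hgF x).trans (hgood.2 hx)
        simp [hSdef, not_lt.2 this]
      · exact Or.inr hgood
    calc ρ B ≤ ρ (Sᶜ ∪ _) := measure_mono hsub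
      _ ≤ ρ Sᶜ + ρ _ := measure_union_le _ _
      _ = ρ Sᶜ := by rw [hN, add_zero]
  have h1 : ∫⁻ x in S, g x ∂ρ ≤ ρ S := by
    have hg1 : ∀ᵐ x ∂ρ.restrict S, g x ≤ 1 := by
      refine ae_restrict_of_ae ?_
      filter_upwards [hF] with x hx using (hgF x).trans hx.1
    calc ∫⁻ x in S, g x ∂ρ ≤ ∫⁻ _ in S, 1 ∂ρ := lintegral_mono_ae hg1
      _ = ρ S := by simp
  have h2 : ∫⁻ x in Sᶜ, g x ∂ρ ≤ c * ρ Sᶜ := by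
    calc ∫⁻ x in Sᶜ, g x ∂ρ ≤ ∫⁻ _ in Sᶜ, c ∂ρ :=
          setLIntegral_mono measurable_const (fun x hx => not_lt.1 hx)
      _ = c * ρ Sᶜ := setLIntegral_const _ _
  calc ∫⁻ x, F x ∂ρ + (1 - c) * ρ B
      = (∫⁻ x in S, g x ∂ρ + ∫⁻ x in Sᶜ, g x ∂ρ) + (1 - c) * ρ B := by
        rw [hgeq, lintegral_add_compl g hSm]
    _ ≤ (ρ S + c * ρ Sᶜ) + (1 - c) * ρ Sᶜ := by gcongr
    _ = ρ S + (c + (1 - c)) * ρ Sᶜ := by ring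
    _ = ρ S + ρ Sᶜ := by rw [add_tsub_cancel_of_le hc, one_mul]
    _ = ρ univ := measure_add_measure_compl hSm

/-- The estimate `α(Z) ≤ ε m` on the "bad set" `Z` of fibers on which the shift function
`f_τ` moves some point less than `rδ/H`, where `H = K r^d / (ε m)`. Points of
`ℝ^d = ℝ^{1+n}` are written `x = (σ, τ)` with `σ ∈ ℝ`, `τ ∈ ℝ^n`; `μ` is a finite
measure supported in the cube `[0,r]^{1+n}`, of total mass `m`, with density bounded by
`K`, `α` is the marginal of `μ` in the `τ` variables, `μ_τ ⊗ α` is the disintegration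
of `μ`, and `f_τ (σ)` is defined by `μ_τ ((σ, f_τ(σ)]) = δ` whenever
`μ_τ ([0, σ]) ≤ 1 - δ`. -/
theorem bad_set_estimate (n : ℕ) (r K ε δ m : ℝ)
    (hr : 0 < r) (hK : 0 < K) (hε : 0 < ε) (hδ : 0 < δ) (hδ1 : δ < 1) (hm : 0 < m)
    (μ : Measure (ℝ × (Fin n → ℝ)))
    (hsupp : μ ((Icc (0 : ℝ) r ×ˢ Icc (0 : Fin n → ℝ) (fun _ => r))ᶜ) = 0)
    (hmass : μ univ = ENNReal.ofReal m)
    (hdens : ∀ s : Set (ℝ × (Fin n → ℝ)), μ s ≤ ENNReal.ofReal K * volume s)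
    (α : Measure (Fin n → ℝ)) (hα : α = μ.map Prod.snd)
    (μτ : (Fin n → ℝ) → Measure ℝ)
    (hμτ : ∀ᵐ τ ∂α, IsProbabilityMeasure (μτ τ) ∧ μτ τ (Icc (0 : ℝ) r)ᶜ = 0)
    (hdisint : ∀ s : Set (ℝ × (Fin n → ℝ)), MeasurableSet s →
      μ s = ∫⁻ τ, μτ τ {σ : ℝ | (σ, τ) ∈ s} ∂α)
    (f : (Fin n → ℝ) → ℝ → ℝ)
    (hf : ∀ᵐ τ ∂α, ∀ σ ∈ Icc (0 : ℝ) r,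
      μτ τ (Icc (0 : ℝ) σ) ≤ ENNReal.ofReal (1 - δ) →
        μτ τ (Ioc σ (f τ σ)) = ENNReal.ofReal δ)
    (H : ℝ) (hH : H = K * r ^ (n + 1) / (ε * m)) :
    α {τ | τ ∈ Icc (0 : Fin n → ℝ) (fun _ => r) ∧ ∃ σ ∈ Icc (0 : ℝ) r,
        μτ τ (Icc (0 : ℝ) σ) ≤ ENNReal.ofReal (1 - δ) ∧ f τ σ - σ < r * δ / H} ≤
      ENNReal.ofReal (ε * m) := by
  haveI : IsFiniteMeasure μ := ⟨by rw [hmass]; exact ENNReal.ofReal_lt_top⟩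
  have hrn : (0:ℝ) < r ^ n := pow_pos hr n
  set L : ℝ := r * δ / H with hLdef
  set c : ℝ := ε * m / r ^ n with hcdef
  have hc0 : (0:ℝ) < c := by positivity
  have hL0 : (0:ℝ) < L := by
    rw [hLdef, hH]; positivity
  have hKL : K * L = δ * c := by
    rw [hLdef, hcdef, hH]
    field_simp
    ring
  have hαu : α univ = ENNReal.ofReal m := by
    rw [hα, Measure.map_apply measurable_snd MeasurableSet.univ, preimage_univ, hmass]
  haveI : IsFiniteMeasure α := ⟨by rw [hαu]; exact ENNReal.ofReal_lt_top⟩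
  -- absolute continuity of α
  have hαvol : α ≪ (volume : Measure (Fin n → ℝ)) := by
    refine Measure.AbsolutelyContinuous.mk (fun N hNm hN0 => ?_)
    rw [hα, Measure.map_apply measurable_snd hNm]
    have hpre : (Prod.snd ⁻¹' N : Set (ℝ × (Fin n → ℝ))) = (univ : Set ℝ) ×ˢ N := by
      ext x; simp
    have : volume (Prod.snd ⁻¹' N : Set (ℝ × (Fin n → ℝ))) = 0 := by
      rw [hpre, Measure.volume_eq_prod, Measure.prod_prod, hN0, mul_zero]
    refine le_antisymm ?_ (zero_le)
    calc μ _ ≤ ENNReal.ofReal K * volume _ := hdens _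
      _ = 0 := by rw [this, mul_zero]
  set g : (Fin n → ℝ) → ℝ≥0∞ := α.rnDeriv volume with hgdef
  have hgm : Measurable g := Measure.measurable_rnDeriv _ _
  have hwd : volume.withDensity g = α := Measure.withDensity_rnDeriv_eq α volume hαvol
  -- key vanishing lemma
  have key : ∀ a b q : ℚ, 0 < (q:ℝ) → K * ((b:ℝ) - (a:ℝ)) < δ * (q:ℝ) →
      α {τ | ENNReal.ofReal δ ≤ μτ τ (Ioc (a:ℝ) (b:ℝ)) ∧ ENNReal.ofReal (q:ℝ) ≤ g τ} = 0 := by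
    intro a b q hq hlt
    set B : Set (Fin n → ℝ) :=
      {τ | ENNReal.ofReal δ ≤ μτ τ (Ioc (a:ℝ) (b:ℝ)) ∧ ENNReal.ofReal (q:ℝ) ≤ g τ} with hBdef
    set T : Set (Fin n → ℝ) :=
      toMeasurable α B ∩ {τ | ENNReal.ofReal (q:ℝ) ≤ g τ} with hTdef
    have hTm : MeasurableSet T :=
      (measurableSet_toMeasurable α B).inter (measurableSet_le measurable_const hgm)
    have hBT : B ⊆ T := fun τ hτ => ⟨subset_toMeasurable α B hτ, hτ.2⟩
    have hαTB : α T = α B :=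
      le_antisymm ((measure_mono inter_subset_left).trans (measure_toMeasurable B).le)
        (measure_mono hBT)
    set s : Set (ℝ × (Fin n → ℝ)) := Ioc (a:ℝ) (b:ℝ) ×ˢ T with hsdef
    have hsm : MeasurableSet s := measurableSet_Ioc.prod hTm
    -- upper bound on μ s
    have hupper : μ s ≤ ENNReal.ofReal K * (ENNReal.ofReal ((b:ℝ) - (a:ℝ)) * volume T) := by
      calc μ s ≤ ENNReal.ofReal K * volume s := hdens s
        _ = ENNReal.ofReal K * (ENNReal.ofReal ((b:ℝ) - (a:ℝ)) * volume T) := by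
            rw [hsdef, Measure.volume_eq_prod, Measure.prod_prod, Real.volume_Ioc]
    -- bound on volume T
    have hqT : ENNReal.ofReal (q:ℝ) * volume T ≤ α B := by
      rw [← hαTB, ← hwd, withDensity_apply _ hTm]
      calc ENNReal.ofReal (q:ℝ) * volume T = ∫⁻ _ in T, ENNReal.ofReal (q:ℝ) ∂volume :=
            (setLIntegral_const _ _).symm
        _ ≤ ∫⁻ τ in T, g τ ∂volume := setLIntegral_mono hgm (fun x hx => hx.2)
    -- lower bound on μ s
    have hlower : ENNReal.ofReal δ * α B ≤ μ s := by
      have hδ' : (1:ℝ≥0∞) - ENNReal.ofReal (1 - δ) = ENNReal.ofReal δ := by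
        rw [← ENNReal.ofReal_one, ← ENNReal.ofReal_sub _ (by linarith)]
        norm_num
      have hFae : ∀ᵐ τ ∂α, μτ τ {σ : ℝ | (σ, τ) ∈ sᶜ} ≤ 1 ∧
          (τ ∈ B → μτ τ {σ : ℝ | (σ, τ) ∈ sᶜ} ≤ ENNReal.ofReal (1 - δ)) := by
        filter_upwards [hμτ] with τ hτ
        haveI := hτ.1
        constructor
        · calc μτ τ _ ≤ μτ τ univ := measure_mono (subset_univ _)
            _ = 1 := measure_univ
        · intro hτB
          have hTτ : τ ∈ T := hBT hτB
          have hset : {σ : ℝ | (σ, τ) ∈ sᶜ} = (Ioc (a:ℝ) (b:ℝ))ᶜ := by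
            ext σ; simp [hsdef, hTτ]
          rw [hset, measure_compl measurableSet_Ioc (measure_ne_top _ _), measure_univ]
          calc (1:ℝ≥0∞) - μτ τ (Ioc (a:ℝ) (b:ℝ)) ≤ 1 - ENNReal.ofReal δ :=
                tsub_le_tsub_left hτB.1 _
            _ = ENNReal.ofReal (1 - δ) := by
                rw [← ENNReal.ofReal_one, ← ENNReal.ofReal_sub _ hδ.le]
      have hA := lintegral_bound_aux α _ B (ENNReal.ofReal (1 - δ))
        (by rw [← ENNReal.ofReal_one]; exact ENNReal.ofReal_le_ofReal (by linarith)) hFae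
      rw [hδ'] at hA
      rw [← hdisint sᶜ hsm.compl] at hA
      have hμuniv : α univ = μ s + μ sᶜ := by
        rw [hαu, ← hmass, ← measure_add_measure_compl hsm]
      rw [hμuniv] at hA
      have hsc : μ sᶜ ≠ ∞ := measure_ne_top _ _
      rw [add_comm (μ sᶜ)] at hA
      exact (ENNReal.add_le_add_iff_right hsc).1 hA
    -- conclude
    by_contra hB0
    have hBne : α B ≠ 0 := hB0
    have hBfin : α B ≠ ∞ := measure_ne_top _ _
    have hqne : ENNReal.ofReal (q:ℝ) ≠ 0 := ne_of_gt (ENNReal.ofReal_pos.2 hq)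
    have hTfin : volume T ≠ ∞ := by
      intro hT
      rw [hT, ENNReal.mul_top hqne] at hqT
      exact hBfin (top_le_iff.1 hqT)
    have hδq0 : (0:ℝ) < δ * q := by positivity
    have hchain : ENNReal.ofReal (δ * (q:ℝ)) * α B < ENNReal.ofReal (δ * (q:ℝ)) * α B := by
      calc ENNReal.ofReal (δ * (q:ℝ)) * α B
          = ENNReal.ofReal (q:ℝ) * (ENNReal.ofReal δ * α B) := by
            rw [← mul_assoc, ← ENNReal.ofReal_mul hq.le, mul_comm (q:ℝ) δ]
        _ ≤ ENNReal.ofReal (q:ℝ) * (ENNReal.ofReal K * (ENNReal.ofReal ((b:ℝ) - (a:ℝ)) * volume T)) :=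
            mul_le_mul_right (hlower.trans hupper) _
        _ = ENNReal.ofReal (K * ((b:ℝ) - (a:ℝ))) * (ENNReal.ofReal (q:ℝ) * volume T) := by
            rw [ENNReal.ofReal_mul hK.le]; ring
        _ ≤ ENNReal.ofReal (K * ((b:ℝ) - (a:ℝ))) * α B := mul_le_mul_right hqT _
        _ < ENNReal.ofReal (δ * (q:ℝ)) * α B := by
            refine ENNReal.mul_lt_mul_left hBne hBfin ?_
            exact (ENNReal.ofReal_lt_ofReal_iff hδq0).2 hlt
    exact absurd hchain (lt_irrefl _)
  -- the countable union of bad sets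
  set Idx := {p : ℚ × ℚ × ℚ // 0 < ((p.2.2 : ℝ)) ∧ K * ((p.2.1:ℝ) - (p.1:ℝ)) < δ * (p.2.2:ℝ)}
    with hIdx
  set U : Set (Fin n → ℝ) := ⋃ p : Idx,
    {τ | ENNReal.ofReal δ ≤ μτ τ (Ioc ((p.1.1:ℝ)) ((p.1.2.1:ℝ))) ∧
      ENNReal.ofReal ((p.1.2.2:ℝ)) ≤ g τ} with hUdef
  have hU : α U = 0 :=
    measure_iUnion_null (fun p => key p.1.1 p.1.2.1 p.1.2.2 p.2.1 p.2.2)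
  -- good set
  set N : Set (Fin n → ℝ) := {τ | ¬((IsProbabilityMeasure (μτ τ) ∧ μτ τ (Icc (0:ℝ) r)ᶜ = 0) ∧
      ∀ σ ∈ Icc (0:ℝ) r, μτ τ (Icc (0:ℝ) σ) ≤ ENNReal.ofReal (1 - δ) →
        μτ τ (Ioc σ (f τ σ)) = ENNReal.ofReal δ)} with hNdef
  have hNnull : α N = 0 := by
    have := hμτ.and hf
    simpa [ae_iff, hNdef] using this
  set G : Set (Fin n → ℝ) := {τ | g τ ≤ ENNReal.ofReal c} ∩ Icc 0 (fun _ => r) with hGdef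
  have hGm : MeasurableSet G :=
    (measurableSet_le hgm measurable_const).inter measurableSet_Icc
  have hGbound : α G ≤ ENNReal.ofReal (ε * m) := by
    rw [← hwd, withDensity_apply _ hGm]
    calc ∫⁻ τ in G, g τ ∂volume ≤ ∫⁻ _ in G, ENNReal.ofReal c ∂volume :=
          setLIntegral_mono measurable_const (fun x hx => hx.1)
      _ = ENNReal.ofReal c * volume G := setLIntegral_const _ _
      _ ≤ ENNReal.ofReal c * volume (Icc (0 : Fin n → ℝ) (fun _ => r)) := by
          gcongr; exact inter_subset_right
      _ = ENNReal.ofReal c * ENNReal.ofReal (r ^ n) := by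
          rw [Real.volume_Icc_pi]
          congr 1
          simp only [Pi.zero_apply, sub_zero]
          rw [Finset.prod_const, Finset.card_univ, Fintype.card_fin,
            ← ENNReal.ofReal_pow hr.le]
      _ = ENNReal.ofReal (ε * m) := by
          rw [← ENNReal.ofReal_mul hc0.le]
          congr 1
          rw [hcdef]
          field_simp
  -- covering
  have hcover : {τ | τ ∈ Icc (0 : Fin n → ℝ) (fun _ => r) ∧ ∃ σ ∈ Icc (0 : ℝ) r,
        μτ τ (Icc (0 : ℝ) σ) ≤ ENNReal.ofReal (1 - δ) ∧ f τ σ - σ < r * δ / H} ⊆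
      G ∪ (N ∪ U) := by
    rintro τ ⟨hτcube, σ, hσIcc, hσle, hσlt⟩
    by_cases hτN : τ ∈ N
    · exact Or.inr (Or.inl hτN)
    rw [hNdef, mem_setOf_eq, not_not] at hτN
    obtain ⟨⟨hprob, -⟩, hfτ⟩ := hτN
    by_cases hτG : g τ ≤ ENNReal.ofReal c
    · exact Or.inl ⟨hτG, hτcube⟩
    push_neg at hτG
    refine Or.inr (Or.inr ?_)
    have hμIoc : μτ τ (Ioc σ (f τ σ)) = ENNReal.ofReal δ := hfτ σ hσIcc hσle
    have hℓL : f τ σ - σ < L := hσlt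
    -- choose rationals a, b
    obtain ⟨a, ha1, ha2⟩ := exists_rat_btwn (show σ - (L - (f τ σ - σ)) < σ by linarith)
    obtain ⟨b, hb1, hb2⟩ := exists_rat_btwn (show f τ σ < (a:ℝ) + L by linarith)
    -- choose rational q
    obtain ⟨q, hq0, hq1, hq2⟩ := ENNReal.lt_iff_exists_rat_btwn.1 hτG
    have hq1' : ENNReal.ofReal c < ENNReal.ofReal (q:ℝ) := hq1
    have hq2' : ENNReal.ofReal (q:ℝ) ≤ g τ := le_of_lt hq2
    have hcq : c < (q:ℝ) := by
      by_contra hcq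
      push_neg at hcq
      exact absurd (ENNReal.ofReal_le_ofReal hcq) (not_le.2 hq1')
    have hqpos : (0:ℝ) < (q:ℝ) := hc0.trans hcq
    have hineq : K * ((b:ℝ) - (a:ℝ)) < δ * (q:ℝ) := by
      have h1 : (b:ℝ) - (a:ℝ) < L := by linarith
      have h2 : K * ((b:ℝ) - (a:ℝ)) < K * L := by
        exact mul_lt_mul_of_pos_left h1 hK
      have h3 : δ * c < δ * (q:ℝ) := mul_lt_mul_of_pos_left hcq hδ
      linarith [hKL]
    have hμab : ENNReal.ofReal δ ≤ μτ τ (Ioc ((a:ℝ)) ((b:ℝ))) := by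
      rw [← hμIoc]
      exact measure_mono (Ioc_subset_Ioc ha2.le hb1.le)
    rw [hUdef]
    exact mem_iUnion.2 ⟨⟨(a, b, q), hqpos, hineq⟩, ⟨hμab, hq2'⟩⟩
  calc α _ ≤ α (G ∪ (N ∪ U)) := measure_mono hcover
    _ ≤ α G + α (N ∪ U) := measure_union_le _ _
    _ ≤ α G + (α N + α U) := by gcongr; exact measure_union_le _ _
    _ = α G := by rw [hNnull, hU, add_zero, add_zero]
    _ ≤ ENNReal.ofReal (ε * m) := hGbound
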